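/- Let g be a pseudo-Riemannian metric in coordinates on M with Levi-Civita Christoffel symbols Γ and tracefree part Ψ. Assume that Ψ admits a smooth extension to Ū and that τ := |det g|^{−1/(N+1)} admits a smooth extension to Ū whose value at some boundary point x ∈ U ∩ {x_0 = 0} is nonzero. Then there is a relatively open neighborhood V of x in Ū such that Γ itself admits a smooth extension to V. -/

import Mathlib

noncomputable section

/-- Kronecker delta on `Fin N`. -/
def kron {N : ℕ} (i j : Fin N) : ℝ := if i = j then 1 else 0

/-- `i`-th coordinate partial derivative of a real-valued function on `ℝ^N`. -/
def pd {N : ℕ} (i : Fin N) (f : (Fin N → ℝ) → ℝ) (x : Fin N → ℝ) : ℝ :=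
  fderiv ℝ f x (Pi.single i 1)

/-- Convention: `Γ x i j k` denotes the Christoffel symbol `Γ^k_{ij}` at `x`.
The trace `γ_i := Σ_k Γ^k_{ik}`. -/
def christTrace {N : ℕ} (Γ : (Fin N → ℝ) → Fin N → Fin N → Fin N → ℝ)
    (x : Fin N → ℝ) (i : Fin N) : ℝ :=
  ∑ k, Γ x i k k

/-- Tracefree part `Ψ^k_{ij} := Γ^k_{ij} − (1/(N+1))(γ_i δ^k_j + γ_j δ^k_i)`. -/
def tracefree {N : ℕ} (Γ : (Fin N → ℝ) → Fin N → Fin N → Fin N → ℝ)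
    (x : Fin N → ℝ) (i j k : Fin N) : ℝ :=
  Γ x i j k - (1 / ((N : ℝ) + 1)) *
    (christTrace Γ x i * kron j k + christTrace Γ x j * kron i k)

/-- Projective modification of `Γ` by the one-form `Υ`:
`Γ^k_{ij} + Υ_i δ^k_j + Υ_j δ^k_i`. -/
def pmod {N : ℕ} (Γ : (Fin N → ℝ) → Fin N → Fin N → Fin N → ℝ)
    (Υ : (Fin N → ℝ) → Fin N → ℝ) (x : Fin N → ℝ) (i j k : Fin N) : ℝ :=
  Γ x i j k + Υ x i * kron j k + Υ x j * kron i k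

/-- A Christoffel symbol field on a set `V`: smooth on `V` and symmetric in the
lower indices. -/
def IsChristoffelOn {N : ℕ} (V : Set (Fin N → ℝ))
    (Γ : (Fin N → ℝ) → Fin N → Fin N → Fin N → ℝ) : Prop :=
  ContDiffOn ℝ (⊤ : ℕ∞) Γ V ∧ ∀ x ∈ V, ∀ i j k, Γ x i j k = Γ x j i k

/-- A pseudo-Riemannian metric in coordinates on `V`, given with its inverse:
`g` is smooth on `V`, symmetric, and `ginv` is a (smooth) pointwise inverse of `g`. -/
def IsMetricOn {N : ℕ} (V : Set (Fin N → ℝ))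
    (g ginv : (Fin N → ℝ) → Fin N → Fin N → ℝ) : Prop :=
  ContDiffOn ℝ (⊤ : ℕ∞) g V ∧ ContDiffOn ℝ (⊤ : ℕ∞) ginv V ∧
    (∀ x ∈ V, ∀ i j, g x i j = g x j i) ∧
    (∀ x ∈ V, ∀ i j, (∑ l, g x i l * ginv x l j) = kron i j)

/-- Levi-Civita Christoffel symbols of `g`:
`Γ^k_{ij} = (1/2) Σ_l g^{kl}(∂_i g_{jl} + ∂_j g_{il} − ∂_l g_{ij})`.
Convention: `LC g ginv x i j k = Γ^k_{ij}(x)`. -/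
def LC {N : ℕ} (g ginv : (Fin N → ℝ) → Fin N → Fin N → ℝ)
    (x : Fin N → ℝ) (i j k : Fin N) : ℝ :=
  (1 / 2 : ℝ) * ∑ l, ginv x k l *
    (pd i (fun y => g y j l) x + pd j (fun y => g y i l) x - pd l (fun y => g y i j) x)

/-- Ricci curvature
`Ric_{ij} = Σ_k ∂_k Γ^k_{ij} − Σ_k ∂_j Γ^k_{ki} + Σ_{k,l}(Γ^k_{kl} Γ^l_{ij} − Γ^k_{jl} Γ^l_{ki})`. -/
def Ricci {N : ℕ} (g ginv : (Fin N → ℝ) → Fin N → Fin N → ℝ)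
    (x : Fin N → ℝ) (i j : Fin N) : ℝ :=
  (∑ k, pd k (fun y => LC g ginv y i j k) x)
    - (∑ k, pd j (fun y => LC g ginv y k i k) x)
    + ∑ k, ∑ l,
        (LC g ginv x k l k * LC g ginv x i j l - LC g ginv x j l k * LC g ginv x k i l)

/-- Scalar curvature `S = Σ_{i,j} g^{ij} Ric_{ij}`. -/
def scal {N : ℕ} (g ginv : (Fin N → ℝ) → Fin N → Fin N → ℝ) (x : Fin N → ℝ) : ℝ :=
  ∑ i, ∑ j, ginv x i j * Ricci g ginv x i j

/-- `|det g(x)|`. -/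
def absDet {N : ℕ} (g : (Fin N → ℝ) → Fin N → Fin N → ℝ) (x : Fin N → ℝ) : ℝ :=
  |(Matrix.of (g x)).det|

/-- `τ(x) := |det g(x)|^{−1/(N+1)}`. -/
def tau {N : ℕ} (g : (Fin N → ℝ) → Fin N → Fin N → ℝ) (x : Fin N → ℝ) : ℝ :=
  absDet g x ^ (-(1 : ℝ) / ((N : ℝ) + 1))

/-- `M = U ∩ {x_0 > 0}`. -/
def Mset {N : ℕ} [NeZero N] (U : Set (Fin N → ℝ)) : Set (Fin N → ℝ) :=
  {x | x ∈ U ∧ 0 < x 0}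

/-- `Ū = U ∩ {x_0 ≥ 0}`. -/
def Uclo {N : ℕ} [NeZero N] (U : Set (Fin N → ℝ)) : Set (Fin N → ℝ) :=
  {x | x ∈ U ∧ 0 ≤ x 0}

/-- The boundary `U ∩ {x_0 = 0}`. -/
def Bdry {N : ℕ} [NeZero N] (U : Set (Fin N → ℝ)) : Set (Fin N → ℝ) :=
  {x | x ∈ U ∧ x 0 = 0}

/-- `V` is a relatively open neighborhood of `x` in `A`. -/
def RelOpenNbhd {N : ℕ} (A V : Set (Fin N → ℝ)) (x : Fin N → ℝ) : Prop :=
  x ∈ V ∧ ∃ O : Set (Fin N → ℝ), IsOpen O ∧ V = O ∩ A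

namespace Stmt7Aux
open Matrix in
example : True := trivial
open scoped Matrix

def detCML (N : ℕ) : ContinuousMultilinearMap ℝ (fun _ : Fin N => (Fin N → ℝ)) ℝ :=
  (Matrix.detRowAlternating (R := ℝ) (n := Fin N)).toMultilinearMap.mkContinuous
    (N.factorial) (by
      intro m
      have h1 : (Matrix.detRowAlternating (R := ℝ) (n := Fin N)).toMultilinearMap m
          = (Matrix.of m).det := rfl
      rw [h1, Matrix.det_apply]
      calc ‖∑ σ : Equiv.Perm (Fin N), Equiv.Perm.sign σ • ∏ i, Matrix.of m (σ i) i‖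
          ≤ ∑ σ : Equiv.Perm (Fin N), ‖Equiv.Perm.sign σ • ∏ i, Matrix.of m (σ i) i‖ :=
            norm_sum_le _ _
        _ ≤ ∑ _σ : Equiv.Perm (Fin N), ∏ i, ‖m i‖ := by
            refine Finset.sum_le_sum fun σ _ => ?_
            have h2 : ‖Equiv.Perm.sign σ • ∏ i, Matrix.of m (σ i) i‖
                = ‖∏ i, Matrix.of m (σ i) i‖ := by
              rcases Int.units_eq_one_or (Equiv.Perm.sign σ) with h | h <;>
                simp [h, Units.smul_def]
            rw [h2]
            have h3 : ‖∏ i, Matrix.of m (σ i) i‖ ≤ ∏ i, ‖m (σ i)‖ := by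
              rw [norm_prod]
              exact Finset.prod_le_prod (fun _ _ => norm_nonneg _)
                (fun i _ => norm_le_pi_norm (m (σ i)) i)
            calc ‖∏ i, Matrix.of m (σ i) i‖ ≤ ∏ i, ‖m (σ i)‖ := h3
              _ = ∏ i, ‖m i‖ := Equiv.prod_comp σ (fun i => ‖m i‖)
        _ = (N.factorial : ℝ) * ∏ i, ‖m i‖ := by
            rw [Finset.sum_const, Finset.card_univ, Fintype.card_perm, Fintype.card_fin,
              nsmul_eq_mul])

lemma detCML_apply {N : ℕ} (m : Fin N → Fin N → ℝ) : detCML N m = (Matrix.of m).det := rfl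

variable {N : ℕ} {s : Set (Fin N → ℝ)} {g ginv : (Fin N → ℝ) → Fin N → Fin N → ℝ}
  {y : Fin N → ℝ}

lemma entry_cd (h : IsMetricOn s g ginv) (k l : Fin N) :
    ContDiffOn ℝ (⊤ : ℕ∞) (fun z => g z k l) s :=
  contDiffOn_pi.mp (contDiffOn_pi.mp h.1 k) l

lemma entry_diff (hs : IsOpen s) (h : IsMetricOn s g ginv) (hy : y ∈ s) (k l : Fin N) :
    DifferentiableAt ℝ (fun z => g z k l) y :=
  ((entry_cd h k l).differentiableOn (by simp)).differentiableAt (hs.mem_nhds hy)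

lemma matmul (h : IsMetricOn s g ginv) (hy : y ∈ s) :
    Matrix.of (g y) * Matrix.of (ginv y) = 1 := by
  ext i j
  have := h.2.2.2 y hy i j
  simpa [Matrix.mul_apply, Matrix.one_apply, kron] using this

lemma ginv_symm (h : IsMetricOn s g ginv) (hy : y ∈ s) (k l : Fin N) :
    ginv y k l = ginv y l k := by
  set A := Matrix.of (g y) with hA
  set B := Matrix.of (ginv y) with hB
  have hAB : A * B = 1 := matmul h hy
  have hAt : Aᵀ = A := by
    ext i j
    exact h.2.2.1 y hy j i
  have h1 : Bᵀ * A = 1 := by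
    have := congrArg Matrix.transpose hAB
    rw [Matrix.transpose_mul, hAt, Matrix.transpose_one] at this
    exact this
  have h2 : B = Bᵀ := by
    calc B = 1 * B := (Matrix.one_mul B).symm
      _ = (Bᵀ * A) * B := by rw [h1]
      _ = Bᵀ * (A * B) := by rw [Matrix.mul_assoc]
      _ = Bᵀ := by rw [hAB, Matrix.mul_one]
  have := congrFun (congrFun h2 k) l
  simpa [hB, Matrix.transpose_apply] using this

lemma det_ne (h : IsMetricOn s g ginv) (hy : y ∈ s) : (Matrix.of (g y)).det ≠ 0 := by
  have hAB := matmul h hy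
  have hd := congrArg Matrix.det hAB
  rw [Matrix.det_mul, Matrix.det_one] at hd
  intro h0
  rw [h0, zero_mul] at hd
  exact zero_ne_one hd

lemma adj_eq (h : IsMetricOn s g ginv) (hy : y ∈ s) :
    Matrix.adjugate (Matrix.of (g y)) = (Matrix.of (g y)).det • Matrix.of (ginv y) := by
  set A := Matrix.of (g y)
  set B := Matrix.of (ginv y)
  have hAB : A * B = 1 := matmul h hy
  have hBA : B * A = 1 := mul_eq_one_comm.mp hAB
  calc Matrix.adjugate A = 1 * Matrix.adjugate A := (Matrix.one_mul _).symm
    _ = (B * A) * Matrix.adjugate A := by rw [hBA]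
    _ = B * (A * Matrix.adjugate A) := by rw [Matrix.mul_assoc]
    _ = B * (A.det • 1) := by rw [Matrix.mul_adjugate]
    _ = A.det • (B * 1) := by rw [Matrix.mul_smul]
    _ = A.det • B := by rw [Matrix.mul_one]

lemma det_hasFDeriv (hs : IsOpen s) (h : IsMetricOn s g ginv) (hy : y ∈ s) :
    HasFDerivAt (fun z => (Matrix.of (g z)).det)
      (∑ k, ((detCML N).toContinuousLinearMap (g y) k).comp
        (ContinuousLinearMap.pi fun j => fderiv ℝ (fun z => g z k j) y)) y := by
  have hrow : ∀ k, HasFDerivAt (fun z => g z k)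
      (ContinuousLinearMap.pi fun j => fderiv ℝ (fun z => g z k j) y) y := fun k =>
    hasFDerivAt_pi.2 fun j => (entry_diff hs h hy k j).hasFDerivAt
  exact HasFDerivAt.multilinear_comp (detCML N) hrow

lemma detCML_update (h : IsMetricOn s g ginv) (hy : y ∈ s) (k : Fin N) (w : Fin N → ℝ) :
    detCML N (Function.update (g y) k w)
      = ∑ j, w j * ((Matrix.of (g y)).det * ginv y j k) := by
  conv_lhs => rw [← Finset.univ_sum_single w]
  have hcoe : ∀ m, detCML N m = (detCML N).toMultilinearMap m := fun _ => rfl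
  rw [hcoe, MultilinearMap.map_update_sum]
  refine Finset.sum_congr rfl fun j _ => ?_
  have h1 : Pi.single j (w j) = w j • (Pi.single j (1 : ℝ) : Fin N → ℝ) := by
    funext a
    simp [Pi.single_apply, mul_ite]
  rw [h1, ← hcoe]
  rw [(detCML N).map_update_smul]
  have h2 : detCML N (Function.update (g y) k (Pi.single j (1:ℝ)))
      = (Matrix.adjugate (Matrix.of (g y))) j k := by
    rw [Matrix.adjugate_apply]
    rfl
  rw [h2, adj_eq h hy]
  simp [smul_eq_mul]

lemma pd_det (hs : IsOpen s) (h : IsMetricOn s g ginv) (hy : y ∈ s) (i : Fin N) :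
    pd i (fun z => (Matrix.of (g z)).det) y
      = (Matrix.of (g y)).det * ∑ k, ∑ l, ginv y k l * pd i (fun z => g z k l) y := by
  have hF := det_hasFDeriv hs h hy
  rw [pd, hF.fderiv]
  rw [ContinuousLinearMap.sum_apply]
  have hterm : ∀ k, (((detCML N).toContinuousLinearMap (g y) k).comp
        (ContinuousLinearMap.pi fun j => fderiv ℝ (fun z => g z k j) y)) (Pi.single i 1)
      = ∑ j, pd i (fun z => g z k j) y * ((Matrix.of (g y)).det * ginv y j k) := by
    intro k
    rw [ContinuousLinearMap.comp_apply, ContinuousMultilinearMap.toContinuousLinearMap_apply]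
    exact detCML_update h hy k _
  rw [Finset.sum_congr rfl fun k _ => hterm k, Finset.mul_sum]
  refine Finset.sum_congr rfl fun k _ => ?_
  rw [Finset.mul_sum]
  refine Finset.sum_congr rfl fun l _ => ?_
  rw [ginv_symm h hy l k]
  ring

lemma trace_eq (h : IsMetricOn s g ginv) (hy : y ∈ s) (i : Fin N) :
    christTrace (LC g ginv) y i
      = (1 / 2 : ℝ) * ∑ k, ∑ l, ginv y k l * pd i (fun z => g z k l) y := by
  have hswap : ∑ k, ∑ l, ginv y k l * pd l (fun z => g z i k) y
      = ∑ k, ∑ l, ginv y k l * pd k (fun z => g z i l) y := by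
    rw [Finset.sum_comm]
    refine Finset.sum_congr rfl fun k _ => Finset.sum_congr rfl fun l _ => ?_
    rw [ginv_symm h hy l k]
  simp only [christTrace, LC]
  rw [← Finset.mul_sum]
  congr 1
  have hexp : ∀ k l : Fin N, ginv y k l *
      (pd i (fun z => g z k l) y + pd k (fun z => g z i l) y - pd l (fun z => g z i k) y)
      = ginv y k l * pd i (fun z => g z k l) y + ginv y k l * pd k (fun z => g z i l) y
        - ginv y k l * pd l (fun z => g z i k) y := fun k l => by ring
  calc ∑ k, ∑ l, ginv y k l *
      (pd i (fun z => g z k l) y + pd k (fun z => g z i l) y - pd l (fun z => g z i k) y)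
      = ∑ k, ∑ l, (ginv y k l * pd i (fun z => g z k l) y
          + ginv y k l * pd k (fun z => g z i l) y
          - ginv y k l * pd l (fun z => g z i k) y) := by
        exact Finset.sum_congr rfl fun k _ => Finset.sum_congr rfl fun l _ => hexp k l
    _ = (∑ k, ∑ l, ginv y k l * pd i (fun z => g z k l) y)
        + (∑ k, ∑ l, ginv y k l * pd k (fun z => g z i l) y)
        - ∑ k, ∑ l, ginv y k l * pd l (fun z => g z i k) y := by
        simp [Finset.sum_add_distrib, Finset.sum_sub_distrib]
    _ = ∑ k, ∑ l, ginv y k l * pd i (fun z => g z k l) y := by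
        rw [hswap]; ring

lemma tau_pos (h : IsMetricOn s g ginv) (hy : y ∈ s) : 0 < tau g y :=
  Real.rpow_pos_of_pos (abs_pos.2 (det_ne h hy)) _

lemma pd_tau (hs : IsOpen s) (h : IsMetricOn s g ginv) (hy : y ∈ s) (i : Fin N) :
    pd i (tau g) y = (-(1 : ℝ) / ((N : ℝ) + 1)) * tau g y
      * ∑ k, ∑ l, ginv y k l * pd i (fun z => g z k l) y := by
  set p : ℝ := -(1 : ℝ) / ((N : ℝ) + 1) with hp
  set F : (Fin N → ℝ) → ℝ := fun z => (Matrix.of (g z)).det with hFdef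
  set S : ℝ := ∑ k, ∑ l, ginv y k l * pd i (fun z => g z k l) y with hS
  have hF := det_hasFDeriv hs h hy
  set D := ∑ k, ((detCML N).toContinuousLinearMap (g y) k).comp
      (ContinuousLinearMap.pi fun j => fderiv ℝ (fun z => g z k j) y) with hD
  have hFc : ContinuousAt F y := hF.differentiableAt.continuousAt
  have hDe : D (Pi.single i 1) = F y * S := by
    have := pd_det hs h hy i
    rw [pd, hF.fderiv] at this
    exact this
  have hne : F y ≠ 0 := det_ne h hy
  rcases hne.lt_or_gt with hd | hd
  · -- F y < 0
    have hd' : 0 < -F y := neg_pos.2 hd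
    have hev : tau g =ᶠ[nhds y] fun z => (-F z) ^ p := by
      filter_upwards [hFc.preimage_mem_nhds (Iio_mem_nhds hd)] with z hz
      have : absDet g z = -F z := abs_of_neg hz
      rw [tau, this, hp]
    have hG : HasFDerivAt (fun z => -F z) (-D) y := hF.neg
    have hτ : HasFDerivAt (tau g) ((p * (-F y) ^ (p - 1)) • (-D)) y :=
      (hG.rpow_const (Or.inl hd'.ne')).congr_of_eventuallyEq hev
    rw [pd, hτ.fderiv]
    rw [ContinuousLinearMap.smul_apply, ContinuousLinearMap.neg_apply, hDe, smul_eq_mul]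
    have htau : tau g y = (-F y) ^ p := by
      rw [tau, hp, absDet, abs_of_neg hd]
    rw [htau]
    have hsub : (-F y) ^ (p - 1) = (-F y) ^ p / (-F y) := by
      rw [Real.rpow_sub hd', Real.rpow_one]
    rw [hsub]
    field_simp
  · -- 0 < F y
    have hev : tau g =ᶠ[nhds y] fun z => F z ^ p := by
      filter_upwards [hFc.preimage_mem_nhds (Ioi_mem_nhds hd)] with z hz
      have : absDet g z = F z := abs_of_pos hz
      rw [tau, this, hp]
    have hτ : HasFDerivAt (tau g) ((p * F y ^ (p - 1)) • D) y :=
      (hF.rpow_const (Or.inl hd.ne')).congr_of_eventuallyEq hev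
    rw [pd, hτ.fderiv]
    rw [ContinuousLinearMap.smul_apply, hDe, smul_eq_mul]
    have htau : tau g y = F y ^ p := by
      rw [tau, hp, absDet, abs_of_pos hd]
    rw [htau]
    have hsub : F y ^ (p - 1) = F y ^ p / F y := by
      rw [Real.rpow_sub hd, Real.rpow_one]
    rw [hsub]
    field_simp

lemma key (hs : IsOpen s) (h : IsMetricOn s g ginv) (hy : y ∈ s) (i : Fin N) :
    (1 / ((N : ℝ) + 1)) * christTrace (LC g ginv) y i
      = -(1 / 2 : ℝ) * (pd i (tau g) y / tau g y) := by
  have hN1 : ((N : ℝ) + 1) ≠ 0 := by positivity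
  have hτ := (tau_pos h hy).ne'
  rw [trace_eq h hy i, pd_tau hs h hy i]
  field_simp

end Stmt7Aux

/-- if the tracefree part of the Levi-Civita symbols extends smoothly to `Ū`
and `τ = |det g|^{−1/(N+1)}` extends smoothly to `Ū` with nonzero value at a boundary
point `x`, then the Levi-Civita symbols themselves extend smoothly to some relatively
open neighborhood of `x` in `Ū`. -/
theorem stmt7 {N : ℕ} [NeZero N] (hN : 2 ≤ N) (U : Set (Fin N → ℝ)) (hU : IsOpen U)
    (hB : (Bdry U).Nonempty)
    (g ginv : (Fin N → ℝ) → Fin N → Fin N → ℝ) (hg : IsMetricOn (Mset U) g ginv)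
    (hΨ : ∃ P : (Fin N → ℝ) → Fin N → Fin N → Fin N → ℝ,
      ContDiffOn ℝ (⊤ : ℕ∞) P (Uclo U) ∧
        ∀ x ∈ Mset U, ∀ i j k, P x i j k = tracefree (LC g ginv) x i j k)
    (x : Fin N → ℝ) (hx : x ∈ Bdry U)
    (hτ : ∃ T : (Fin N → ℝ) → ℝ, ContDiffOn ℝ (⊤ : ℕ∞) T (Uclo U) ∧
      (∀ y ∈ Mset U, T y = tau g y) ∧ T x ≠ 0) :
    ∃ V : Set (Fin N → ℝ), RelOpenNbhd (Uclo U) V x ∧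
      ∃ G : (Fin N → ℝ) → Fin N → Fin N → Fin N → ℝ, ContDiffOn ℝ (⊤ : ℕ∞) G V ∧
        ∀ y ∈ V ∩ Mset U, ∀ i j k, G y i j k = LC g ginv y i j k := by
  
  classical
  obtain ⟨P, hP1, hP2⟩ := hΨ
  obtain ⟨T, hT1, hT2, hTx⟩ := hτ
  have hMopen : IsOpen (Mset U) := by
    have he : Mset U = U ∩ (fun z : Fin N → ℝ => z 0) ⁻¹' Set.Ioi 0 := rfl
    rw [he]
    exact hU.inter (isOpen_Ioi.preimage (continuous_apply 0))
  have hMsub : Mset U ⊆ Uclo U := fun z hz => ⟨hz.1, hz.2.le⟩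
  have hUD : UniqueDiffOn ℝ (Uclo U) := by
    have hH : UniqueDiffOn ℝ {z : Fin N → ℝ | 0 ≤ z 0} := by
      refine uniqueDiffOn_convex
        (convex_halfSpace_ge ⟨fun a b => rfl, fun c a => rfl⟩ 0) ?_
      refine ⟨fun _ => 1, ?_⟩
      have hop : IsOpen {z : Fin N → ℝ | 0 < z 0} :=
        isOpen_Ioi.preimage (continuous_apply 0)
      have hsub : {z : Fin N → ℝ | 0 < z 0} ⊆ interior {z : Fin N → ℝ | 0 ≤ z 0} := by
        rw [hop.subset_interior_iff]
        exact fun z hz => show (0:ℝ) ≤ z 0 from le_of_lt hz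
      exact hsub (by norm_num)
    intro z hz
    have heq : Uclo U = {w : Fin N → ℝ | 0 ≤ w 0} ∩ U := by
      ext w; exact ⟨fun hw => ⟨hw.2, hw.1⟩, fun hw => ⟨hw.2, hw.1⟩⟩
    rw [heq] at hz ⊢
    exact (uniqueDiffWithinAt_inter (hU.mem_nhds hz.2)).2 (hH z hz.1)
  obtain ⟨O, hO, hOeq⟩ := (continuousOn_iff'.mp hT1.continuousOn) {(0 : ℝ)}ᶜ
    isOpen_compl_singleton
  set V : Set (Fin N → ℝ) := T ⁻¹' {(0 : ℝ)}ᶜ ∩ Uclo U with hV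
  have hVsub : V ⊆ Uclo U := Set.inter_subset_right
  have hTne : ∀ y ∈ V, T y ≠ 0 := fun y hy => hy.1
  have hxV : x ∈ V := ⟨hTx, hx.1, hx.2.ge⟩
  set Q : Fin N → (Fin N → ℝ) → ℝ :=
    fun i y => fderivWithin ℝ T (Uclo U) y (Pi.single i 1) with hQ
  have hQcd : ∀ i, ContDiffOn ℝ (⊤ : ℕ∞) (Q i) (Uclo U) := fun i =>
    (hT1.fderivWithin hUD (by exact_mod_cast le_top)).clm_apply contDiffOn_const
  refine ⟨V, ⟨hxV, O, hO, hOeq⟩, ?_⟩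
  refine ⟨fun y i j k => P y i j k - (1 / 2 : ℝ) *
      ((Q i y / T y) * kron j k + (Q j y / T y) * kron i k), ?_, ?_⟩
  · refine contDiffOn_pi.2 fun i => contDiffOn_pi.2 fun j => contDiffOn_pi.2 fun k => ?_
    have hPc : ContDiffOn ℝ (⊤ : ℕ∞) (fun y => P y i j k) V :=
      (contDiffOn_pi.1 (contDiffOn_pi.1 (contDiffOn_pi.1 hP1 i) j) k).mono hVsub
    have hquot : ∀ m : Fin N, ContDiffOn ℝ (⊤ : ℕ∞) (fun y => Q m y / T y) V :=
      fun m => ((hQcd m).mono hVsub).div (hT1.mono hVsub) hTne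
    exact hPc.sub (contDiffOn_const.mul (((hquot i).mul contDiffOn_const).add
      ((hquot j).mul contDiffOn_const)))
  · intro y hy i j k
    have hyM : y ∈ Mset U := hy.2
    have hMn : Mset U ∈ nhds y := hMopen.mem_nhds hyM
    have hTτ : T y = tau g y := hT2 y hyM
    have hQpd : ∀ m : Fin N, Q m y = pd m (tau g) y := by
      intro m
      have h1 : fderivWithin ℝ T (Uclo U) y = fderiv ℝ T y :=
        fderivWithin_of_mem_nhds (Filter.mem_of_superset hMn hMsub)
      have h2 : fderiv ℝ T y = fderiv ℝ (tau g) y :=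
        Filter.EventuallyEq.fderiv_eq (Filter.eventuallyEq_of_mem hMn hT2)
      show fderivWithin ℝ T (Uclo U) y (Pi.single m 1) = pd m (tau g) y
      rw [h1, h2]; rfl
    have k1 := Stmt7Aux.key hMopen hg hyM i
    have k2 := Stmt7Aux.key hMopen hg hyM j
    show P y i j k - (1 / 2 : ℝ) *
      ((Q i y / T y) * kron j k + (Q j y / T y) * kron i k) = LC g ginv y i j k
    rw [hP2 y hyM i j k]
    simp only [tracefree]
    rw [hTτ, hQpd i, hQpd j]
    linear_combination (-(kron j k)) * k1 + (-(kron i k)) * k2
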